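/- Let p be a point sphere complex, ℝ^{4,2} = D₁ ⊕⊥ D₂ a Dupin cyclide, and γ ⊂ ℝ^{4,2} a circle (a 3-dimensional subspace orthogonal to p with induced form of signature (2,1)). For i = 1, 2 let s_{i1} ∈ D₁ and s_{i2} ∈ D₂ be nonzero isotropic vectors and m_i ∈ span{s_{i1}, s_{i2}} a nonzero point sphere (⟨m_i,p⟩ = 0) with m_i ∉ span{s_{i1}} and m_i ∉ span{s_{i2}}; assume the circle γ intersects the Dupin cyclide orthogonally at m_i, i.e. m_i ∈ γ and s_{ij} + ⟨s_{ij},p⟩p ∈ γ for j = 1, 2, and assume m₁, m₂ are linearly independent. Then either (a) span{s_{11},s_{12}} ∩ span{s_{21},s_{22}} ≠ {0}, so the two contact elements share a common curvature sphere s̄, which satisfies ⟨m₁,s̄⟩ = ⟨m₂,s̄⟩ = 0 — i.e. m₁ and m₂ lie on a common curvature circle; or (b) there exist nonzero point spheres m₃ ∈ span{s_{11},s_{22}} ∩ γ and m₄ ∈ span{s_{21},s_{12}} ∩ γ with m₃, m₄ ∉ span{m₁} ∪ span{m₂}, so that γ intersects the Dupin cyclide orthogonally in at least four pairwise non-proportional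 points and is not a 2-ortho-circle. In particular, the two intersection points of a 2-ortho-circle with a Dupin cyclide lie on a common curvature circle. -/
import Mathlib


noncomputable section

/-- The symmetric bilinear form of signature (4,2) on ℝ⁶, modelling ℝ^{4,2}. -/
def B (x y : Fin 6 → ℝ) : ℝ :=
  x 0 * y 0 + x 1 * y 1 + x 2 * y 2 + x 3 * y 3 - x 4 * y 4 - x 5 * y 5

/-- The induced form on the subspace `W` has signature (2,1) (it admits a
spanning pseudo-orthonormal triple of Gram matrix diag(1,1,-1)); in particular
`W` is 3-dimensional. -/
def SigTwoOne (W : Submodule ℝ (Fin 6 → ℝ)) : Prop :=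
  ∃ u v w : Fin 6 → ℝ, Submodule.span ℝ ({u, v, w} : Set (Fin 6 → ℝ)) = W ∧
    B u u = 1 ∧ B v v = 1 ∧ B w w = -1 ∧ B u v = 0 ∧ B u w = 0 ∧ B v w = 0

lemma B_comm (x y : Fin 6 → ℝ) : B x y = B y x := by unfold B; ring
lemma B_add_left (x y z : Fin 6 → ℝ) : B (x + y) z = B x z + B y z := by
  simp only [B, Pi.add_apply]; ring
lemma B_smul_left (c : ℝ) (x y : Fin 6 → ℝ) : B (c • x) y = c * B x y := by
  simp only [B, Pi.smul_apply, smul_eq_mul]; ring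
lemma B_add_right (x y z : Fin 6 → ℝ) : B x (y + z) = B x y + B x z := by
  simp only [B, Pi.add_apply]; ring
lemma B_smul_right (c : ℝ) (x y : Fin 6 → ℝ) : B x (c • y) = c * B x y := by
  simp only [B, Pi.smul_apply, smul_eq_mul]; ring

lemma sig_nd {W : Submodule ℝ (Fin 6 → ℝ)} (h : SigTwoOne W) {x : Fin 6 → ℝ}
    (hx : x ∈ W) (hbx : ∀ y ∈ W, B y x = 0) : x = 0 := by
  obtain ⟨u, v, w, hsp, huu, hvv, hww, huv, huw, hvw⟩ := h
  have hu : u ∈ W := hsp ▸ Submodule.subset_span (by simp)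
  have hv : v ∈ W := hsp ▸ Submodule.subset_span (by simp)
  have hw : w ∈ W := hsp ▸ Submodule.subset_span (by simp)
  rw [← hsp] at hx
  obtain ⟨a, z, hz, rfl⟩ := Submodule.mem_span_insert.mp hx
  obtain ⟨b, z', hz', rfl⟩ := Submodule.mem_span_insert.mp hz
  obtain ⟨c, rfl⟩ := Submodule.mem_span_singleton.mp hz'
  have hvu : B v u = 0 := by rw [B_comm]; exact huv
  have hwu : B w u = 0 := by rw [B_comm]; exact huw
  have hwv : B w v = 0 := by rw [B_comm]; exact hvw
  have h1 := hbx _ hu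
  have h2 := hbx _ hv
  have h3 := hbx _ hw
  simp only [B_add_right, B_smul_right, huu, hvv, hww, huv, huw, hvw, hvu, hwu, hwv] at h1 h2 h3
  have ha : a = 0 := by linarith
  have hb : b = 0 := by linarith
  have hc : c = 0 := by linarith
  simp [ha, hb, hc]

/-- Construction of a further point sphere in `span {s1, t2} ∩ γ`. -/
lemma build_m (p s1 t1 s2 t2 m₁ m₂ : Fin 6 → ℝ) (a b c d : ℝ)
    (D₁ D₂ γ : Submodule ℝ (Fin 6 → ℝ))
    (hdisj : ∀ x ∈ D₁, ∀ y ∈ D₂, x + y = 0 → x = 0 ∧ y = 0)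
    (hs1D : s1 ∈ D₁) (ht1D : t1 ∈ D₂) (hs2D : s2 ∈ D₁) (ht2D : t2 ∈ D₂)
    (hs1 : s1 ≠ 0) (ht2 : t2 ≠ 0)
    (is1 : B s1 s1 = 0) (it2 : B t2 t2 = 0) (o12 : B s1 t2 = 0)
    (hb : b ≠ 0) (hc : c ≠ 0)
    (hm1 : a • s1 + b • t1 = m₁) (hm2 : c • s2 + d • t2 = m₂)
    (ind1 : ∀ x y : ℝ, x • s1 = y • s2 → x = 0 ∧ y = 0)
    (ind2 : ∀ x y : ℝ, x • t1 = y • t2 → x = 0 ∧ y = 0)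
    (hg1 : s1 + B s1 p • p ∈ γ) (hg2 : t2 + B t2 p • p ∈ γ) :
    ∃ m₃ : Fin 6 → ℝ, m₃ ≠ 0 ∧ B m₃ m₃ = 0 ∧ B m₃ p = 0 ∧
      m₃ ∈ Submodule.span ℝ ({s1, t2} : Set (Fin 6 → ℝ)) ∧ m₃ ∈ γ ∧
      m₃ ∉ Submodule.span ℝ ({m₁} : Set (Fin 6 → ℝ)) ∧
      m₃ ∉ Submodule.span ℝ ({m₂} : Set (Fin 6 → ℝ)) := by
  obtain ⟨α, β, hαβ, hcon⟩ : ∃ α β : ℝ, (α ≠ 0 ∨ β ≠ 0) ∧ α * B s1 p + β * B t2 p = 0 := by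
    by_cases hq : B s1 p = 0
    · exact ⟨1, 0, Or.inl one_ne_zero, by rw [hq]; ring⟩
    · exact ⟨B t2 p, -B s1 p, Or.inr (neg_ne_zero.mpr hq), by ring⟩
  have o21 : B t2 s1 = 0 := by rw [B_comm]; exact o12
  refine ⟨α • s1 + β • t2, ?_, ?_, ?_, ?_, ?_, ?_, ?_⟩
  · intro h0
    obtain ⟨e1, e2⟩ := hdisj _ (D₁.smul_mem α hs1D) _ (D₂.smul_mem β ht2D) h0
    rcases smul_eq_zero.mp e1 with h | h
    · rcases smul_eq_zero.mp e2 with h' | h'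
      · rcases hαβ with hx | hx <;> [exact hx h; exact hx h']
      · exact ht2 h'
    · exact hs1 h
  · simp only [B_add_left, B_add_right, B_smul_left, B_smul_right, is1, it2, o12, o21]
    ring
  · simp only [B_add_left, B_smul_left]
    linarith
  · exact Submodule.mem_span_pair.mpr ⟨α, β, rfl⟩
  · have key : α • s1 + β • t2 = α • (s1 + B s1 p • p) + β • (t2 + B t2 p • p) := by
      funext i
      simp only [Pi.add_apply, Pi.smul_apply, smul_eq_mul]
      linear_combination p i * hcon.symm
    rw [key]
    exact add_mem (γ.smul_mem _ hg1) (γ.smul_mem _ hg2)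
  · intro hmem
    obtain ⟨k, hk⟩ := Submodule.mem_span_singleton.mp hmem
    rw [← hm1] at hk
    have key : ((α - k * a) • s1) + (β • t2 - (k * b) • t1) = 0 := by
      funext i
      have h := congrFun hk i
      simp only [Pi.add_apply, Pi.smul_apply, Pi.sub_apply, Pi.zero_apply, smul_eq_mul] at h ⊢
      linear_combination -h
    obtain ⟨e1, e2⟩ := hdisj _ (D₁.smul_mem _ hs1D) _
      (sub_mem (D₂.smul_mem _ ht2D) (D₂.smul_mem _ ht1D)) key
    have hα : α = k * a := by
      rcases smul_eq_zero.mp e1 with h | h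
      · linarith [sub_eq_zero.mp (by linarith [h] : α - k * a = 0)]
      · exact absurd h hs1
    have e2' : (k * b) • t1 = β • t2 := (sub_eq_zero.mp e2).symm
    obtain ⟨hkb, hβ⟩ := ind2 _ _ e2'
    have hk0 : k = 0 := by
      rcases mul_eq_zero.mp hkb with h | h
      · exact h
      · exact absurd h hb
    rcases hαβ with hx | hx
    · exact hx (by rw [hα, hk0, zero_mul])
    · exact hx hβ
  · intro hmem
    obtain ⟨k, hk⟩ := Submodule.mem_span_singleton.mp hmem
    rw [← hm2] at hk
    have key : ((α • s1 - (k * c) • s2)) + ((β - k * d) • t2) = 0 := by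
      funext i
      have h := congrFun hk i
      simp only [Pi.add_apply, Pi.smul_apply, Pi.sub_apply, Pi.zero_apply, smul_eq_mul] at h ⊢
      linear_combination -h
    obtain ⟨e1, e2⟩ := hdisj _
      (sub_mem (D₁.smul_mem _ hs1D) (D₁.smul_mem _ hs2D)) _ (D₂.smul_mem _ ht2D) key
    have e1' : α • s1 = (k * c) • s2 := sub_eq_zero.mp e1
    obtain ⟨hα, hkc⟩ := ind1 _ _ e1'
    have hk0 : k = 0 := by
      rcases mul_eq_zero.mp hkc with h | h
      · exact h
      · exact absurd h hc
    have hβ : β = 0 := by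
      rcases smul_eq_zero.mp e2 with h | h
      · rw [hk0] at h; linarith
      · exact absurd h ht2
    rcases hαβ with hx | hx
    · exact hx hα
    · exact hx hβ

/-- If a circle `γ` intersects a Dupin cyclide
`ℝ^{4,2} = D₁ ⊕⊥ D₂` orthogonally in two non-proportional points `m₁, m₂`,
then either the two contact elements share a common curvature sphere — so that
`m₁, m₂` lie on a common curvature circle — or `γ` meets the cyclide
orthogonally in further points `m₃, m₄` not proportional to `m₁` or `m₂`, and
is hence not a 2-ortho-circle. -/
theorem stmt_8 (p : Fin 6 → ℝ) (hp : B p p = -1)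
    (D₁ D₂ : Submodule ℝ (Fin 6 → ℝ))
    (hsig₁ : SigTwoOne D₁) (hsig₂ : SigTwoOne D₂)
    (horth : ∀ x ∈ D₁, ∀ y ∈ D₂, B x y = 0) (hspan : D₁ ⊔ D₂ = ⊤)
    (γ : Submodule ℝ (Fin 6 → ℝ)) (hγp : ∀ x ∈ γ, B x p = 0)
    (hγsig : SigTwoOne γ)
    (s₁₁ s₁₂ s₂₁ s₂₂ m₁ m₂ : Fin 6 → ℝ)
    (hs₁₁D : s₁₁ ∈ D₁) (hs₁₂D : s₁₂ ∈ D₂) (hs₂₁D : s₂₁ ∈ D₁) (hs₂₂D : s₂₂ ∈ D₂)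
    (hs₁₁ : s₁₁ ≠ 0) (hs₁₂ : s₁₂ ≠ 0) (hs₂₁ : s₂₁ ≠ 0) (hs₂₂ : s₂₂ ≠ 0)
    (is₁₁ : B s₁₁ s₁₁ = 0) (is₁₂ : B s₁₂ s₁₂ = 0)
    (is₂₁ : B s₂₁ s₂₁ = 0) (is₂₂ : B s₂₂ s₂₂ = 0)
    (hm₁ : m₁ ≠ 0) (im₁ : B m₁ m₁ = 0) (hm₁p : B m₁ p = 0)
    (hm₁mem : m₁ ∈ Submodule.span ℝ ({s₁₁, s₁₂} : Set (Fin 6 → ℝ)))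
    (hm₁a : m₁ ∉ Submodule.span ℝ ({s₁₁} : Set (Fin 6 → ℝ)))
    (hm₁b : m₁ ∉ Submodule.span ℝ ({s₁₂} : Set (Fin 6 → ℝ)))
    (hm₂ : m₂ ≠ 0) (im₂ : B m₂ m₂ = 0) (hm₂p : B m₂ p = 0)
    (hm₂mem : m₂ ∈ Submodule.span ℝ ({s₂₁, s₂₂} : Set (Fin 6 → ℝ)))
    (hm₂a : m₂ ∉ Submodule.span ℝ ({s₂₁} : Set (Fin 6 → ℝ)))
    (hm₂b : m₂ ∉ Submodule.span ℝ ({s₂₂} : Set (Fin 6 → ℝ)))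
    (hm₁γ : m₁ ∈ γ) (hm₂γ : m₂ ∈ γ)
    (ho₁₁ : s₁₁ + B s₁₁ p • p ∈ γ) (ho₁₂ : s₁₂ + B s₁₂ p • p ∈ γ)
    (ho₂₁ : s₂₁ + B s₂₁ p • p ∈ γ) (ho₂₂ : s₂₂ + B s₂₂ p • p ∈ γ)
    (hind : LinearIndependent ℝ ![m₁, m₂]) :
    (∃ sc : Fin 6 → ℝ, sc ≠ 0 ∧
      sc ∈ Submodule.span ℝ ({s₁₁, s₁₂} : Set (Fin 6 → ℝ)) ∧
      sc ∈ Submodule.span ℝ ({s₂₁, s₂₂} : Set (Fin 6 → ℝ)) ∧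
      B m₁ sc = 0 ∧ B m₂ sc = 0) ∨
    (∃ m₃ m₄ : Fin 6 → ℝ,
      m₃ ≠ 0 ∧ B m₃ m₃ = 0 ∧ B m₃ p = 0 ∧
      m₃ ∈ Submodule.span ℝ ({s₁₁, s₂₂} : Set (Fin 6 → ℝ)) ∧ m₃ ∈ γ ∧
      m₄ ≠ 0 ∧ B m₄ m₄ = 0 ∧ B m₄ p = 0 ∧
      m₄ ∈ Submodule.span ℝ ({s₂₁, s₁₂} : Set (Fin 6 → ℝ)) ∧ m₄ ∈ γ ∧
      m₃ ∉ Submodule.span ℝ ({m₁} : Set (Fin 6 → ℝ)) ∧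
      m₃ ∉ Submodule.span ℝ ({m₂} : Set (Fin 6 → ℝ)) ∧
      m₄ ∉ Submodule.span ℝ ({m₁} : Set (Fin 6 → ℝ)) ∧
      m₄ ∉ Submodule.span ℝ ({m₂} : Set (Fin 6 → ℝ))) := by
  classical
  -- orthogonality facts
  have o1 : B s₁₁ s₁₂ = 0 := horth _ hs₁₁D _ hs₁₂D
  have o2 : B s₁₁ s₂₂ = 0 := horth _ hs₁₁D _ hs₂₂D
  have o3 : B s₂₁ s₁₂ = 0 := horth _ hs₂₁D _ hs₁₂D
  have o4 : B s₂₁ s₂₂ = 0 := horth _ hs₂₁D _ hs₂₂D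
  have o1' : B s₁₂ s₁₁ = 0 := by rw [B_comm]; exact o1
  have o2' : B s₂₂ s₁₁ = 0 := by rw [B_comm]; exact o2
  have o3' : B s₁₂ s₂₁ = 0 := by rw [B_comm]; exact o3
  have o4' : B s₂₂ s₂₁ = 0 := by rw [B_comm]; exact o4
  -- coefficients
  obtain ⟨a, b, hab⟩ := Submodule.mem_span_pair.mp hm₁mem
  obtain ⟨c, d, hcd⟩ := Submodule.mem_span_pair.mp hm₂mem
  have ha : a ≠ 0 := by
    rintro rfl
    exact hm₁b (Submodule.mem_span_singleton.mpr ⟨b, by rw [← hab]; simp⟩)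
  have hbne : b ≠ 0 := by
    rintro rfl
    exact hm₁a (Submodule.mem_span_singleton.mpr ⟨a, by rw [← hab]; simp⟩)
  have hcne : c ≠ 0 := by
    rintro rfl
    exact hm₂b (Submodule.mem_span_singleton.mpr ⟨d, by rw [← hcd]; simp⟩)
  have hdne : d ≠ 0 := by
    rintro rfl
    exact hm₂a (Submodule.mem_span_singleton.mpr ⟨c, by rw [← hcd]; simp⟩)
  -- D₁ ∩ D₂ = 0
  have hD12 : ∀ x, x ∈ D₁ → x ∈ D₂ → x = 0 := fun x h1 h2 =>
    sig_nd hsig₁ h1 (fun y hy => horth y hy x h2)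
  have hdisj : ∀ x ∈ D₁, ∀ y ∈ D₂, x + y = 0 → x = 0 ∧ y = 0 := by
    intro x hx y hy hxy
    have hxm : x = -y := eq_neg_of_add_eq_zero_left hxy
    have hx0 : x = 0 := hD12 x hx (hxm ▸ D₂.neg_mem hy)
    refine ⟨hx0, ?_⟩
    rw [hx0, zero_add] at hxy
    exact hxy
  by_cases h1 : ∃ e : ℝ, s₂₁ = e • s₁₁
  · -- common curvature sphere s₁₁
    obtain ⟨e, he⟩ := h1
    have he0 : e ≠ 0 := by
      rintro rfl
      rw [zero_smul] at he
      exact hs₂₁ he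
    left
    refine ⟨s₁₁, hs₁₁, Submodule.subset_span (by simp), ?_, ?_, ?_⟩
    · exact Submodule.mem_span_pair.mpr ⟨e⁻¹, 0, by
        rw [he, smul_smul, inv_mul_cancel₀ he0, one_smul, zero_smul, add_zero]⟩
    · rw [← hab]
      simp only [B_add_left, B_smul_left, is₁₁, o1']
      ring
    · rw [← hcd, he]
      simp only [B_add_left, B_smul_left, B_smul_right, is₁₁, o2']
      ring
  by_cases h2 : ∃ e : ℝ, s₂₂ = e • s₁₂
  · -- common curvature sphere s₁₂
    obtain ⟨e, he⟩ := h2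
    have he0 : e ≠ 0 := by
      rintro rfl
      rw [zero_smul] at he
      exact hs₂₂ he
    left
    refine ⟨s₁₂, hs₁₂, Submodule.subset_span (by simp), ?_, ?_, ?_⟩
    · exact Submodule.mem_span_pair.mpr ⟨0, e⁻¹, by
        rw [he, smul_smul, inv_mul_cancel₀ he0, one_smul, zero_smul, zero_add]⟩
    · rw [← hab]
      simp only [B_add_left, B_smul_left, is₁₂, o1]
      ring
    · rw [← hcd, he]
      simp only [B_add_left, B_smul_left, B_smul_right, is₁₂, o3]
      ring
  -- independence consequences
  have ind1 : ∀ x y : ℝ, x • s₁₁ = y • s₂₁ → x = 0 ∧ y = 0 := by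
    intro x y hxy
    by_cases hy : y = 0
    · subst hy
      rw [zero_smul] at hxy
      rcases smul_eq_zero.mp hxy with h | h
      · exact ⟨h, rfl⟩
      · exact absurd h hs₁₁
    · exact absurd ⟨y⁻¹ * x, by rw [mul_smul, hxy, smul_smul, inv_mul_cancel₀ hy, one_smul]⟩ h1
  have ind2 : ∀ x y : ℝ, x • s₁₂ = y • s₂₂ → x = 0 ∧ y = 0 := by
    intro x y hxy
    by_cases hy : y = 0
    · subst hy
      rw [zero_smul] at hxy
      rcases smul_eq_zero.mp hxy with h | h
      · exact ⟨h, rfl⟩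
      · exact absurd h hs₁₂
    · exact absurd ⟨y⁻¹ * x, by rw [mul_smul, hxy, smul_smul, inv_mul_cancel₀ hy, one_smul]⟩ h2
  have ind1' : ∀ x y : ℝ, x • s₂₁ = y • s₁₁ → x = 0 ∧ y = 0 := fun x y h =>
    ⟨(ind1 y x h.symm).2, (ind1 y x h.symm).1⟩
  have ind2' : ∀ x y : ℝ, x • s₂₂ = y • s₁₂ → x = 0 ∧ y = 0 := fun x y h =>
    ⟨(ind2 y x h.symm).2, (ind2 y x h.symm).1⟩
  right
  obtain ⟨m₃, p3⟩ := build_m p s₁₁ s₁₂ s₂₁ s₂₂ m₁ m₂ a b c d D₁ D₂ γ hdisj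
    hs₁₁D hs₁₂D hs₂₁D hs₂₂D hs₁₁ hs₂₂ is₁₁ is₂₂ o2 hbne hcne hab hcd ind1
    (fun x y h => ind2 x y h) ho₁₁ ho₂₂
  obtain ⟨m₄, p4⟩ := build_m p s₂₁ s₂₂ s₁₁ s₁₂ m₂ m₁ c d a b D₁ D₂ γ hdisj
    hs₂₁D hs₂₂D hs₁₁D hs₁₂D hs₂₁ hs₁₂ is₂₁ is₁₂ o3 hdne ha hcd hab ind1'
    ind2' ho₂₁ ho₁₂
  exact ⟨m₃, m₄, p3.1, p3.2.1, p3.2.2.1, p3.2.2.2.1, p3.2.2.2.2.1,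
    p4.1, p4.2.1, p4.2.2.1, p4.2.2.2.1, p4.2.2.2.2.1,
    p3.2.2.2.2.2.1, p3.2.2.2.2.2.2, p4.2.2.2.2.2.2, p4.2.2.2.2.2.1⟩
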